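/- arXiv:1105.4083 — 4 statements merged into one kernel-verified Lean document; each statement's English description precedes it below -/
import Mathlib

section
/- The Moore determinant V_q(b_1,...,b_d) = det(b_i^{q^{j-1}})_{1≤i,j≤d}, viewed as a polynomial in F_q[b_1,...,b_d], factors as c · ∏_{ε ∈ P^{d-1}(F_q)} (ε_1 b_1 + ... + ε_d b_d) for some nonzero constant c ∈ F_q, where the product runs over representatives of projective space whose first nonzero coordinate is 1. -/
open scoped Classical

open MvPolynomial

namespace MooreAux

variable {F : Type*} [Field F] [Fintype F]

noncomputable def lin {d : ℕ} (ε : Fin d → F) : MvPolynomial (Fin d) F :=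
  ∑ i, MvPolynomial.C (ε i) * MvPolynomial.X i

theorem prime_X_mv {k : ℕ} (i : Fin (k + 1)) :
    Prime (X i : MvPolynomial (Fin (k + 1)) F) := by
  have h0 : Prime (X (0 : Fin (k + 1)) : MvPolynomial (Fin (k + 1)) F) := by
    rw [← MulEquiv.prime_iff (MvPolynomial.finSuccEquiv F k).toRingEquiv.toMulEquiv]
    simpa [MvPolynomial.finSuccEquiv_X_zero] using Polynomial.prime_X
  have h := MulEquiv.prime_iff (MvPolynomial.renameEquiv F (Equiv.swap (0 : Fin (k + 1)) i)).toRingEquiv.toMulEquiv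
      (p := (X (0 : Fin (k+1)) : MvPolynomial (Fin (k + 1)) F))
  rw [← h] at h0
  simpa [MvPolynomial.renameEquiv_apply, MvPolynomial.rename_X] using h0

theorem aeval_lin {d : ℕ} (ε : Fin d → F) (i0 : Fin d) (t : MvPolynomial (Fin d) F) :
    MvPolynomial.aeval (fun j => if j = i0 then t else X j) (lin ε) =
      lin ε + C (ε i0) * (t - X i0) := by
  rw [lin, map_sum]
  have h : ∀ i : Fin d,
      (MvPolynomial.aeval (fun j => if j = i0 then t else X j)) (C (ε i) * X i) =
        C (ε i) * X i + (if i = i0 then C (ε i0) * (t - X i0) else 0) := by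
    intro i
    simp only [map_mul, MvPolynomial.aeval_C, MvPolynomial.aeval_X,
      MvPolynomial.algebraMap_eq]
    split
    · next hh => subst hh; ring
    · ring
  rw [Finset.sum_congr rfl (fun i _ => h i), Finset.sum_add_distrib,
    Finset.sum_ite_eq' Finset.univ i0 (fun _ => C (ε i0) * (t - X i0))]
  simp [lin]

theorem aeval_if_X {d : ℕ} (i0 : Fin d) (t : MvPolynomial (Fin d) F) :
    MvPolynomial.aeval (R := F) (fun j => if j = i0 then t else X j) (X i0) = t := by
  rw [MvPolynomial.aeval_X, if_pos rfl]

theorem prime_lin {k : ℕ} (ε : Fin (k + 1) → F) (i0 : Fin (k + 1)) (h1 : ε i0 = 1) :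
    Prime (lin ε) := by
  set f : MvPolynomial (Fin (k+1)) F →ₐ[F] MvPolynomial (Fin (k+1)) F :=
    MvPolynomial.aeval (fun j => if j = i0 then lin ε else X j) with hf
  set g : MvPolynomial (Fin (k+1)) F →ₐ[F] MvPolynomial (Fin (k+1)) F :=
    MvPolynomial.aeval (fun j => if j = i0 then X i0 + X i0 - lin ε else X j) with hg
  have hfg : f.comp g = AlgHom.id F _ := by
    apply MvPolynomial.algHom_ext
    intro j
    by_cases hj : j = i0
    · subst hj
      rw [AlgHom.comp_apply, hg, aeval_if_X, AlgHom.id_apply, map_sub, map_add, hf,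
        aeval_if_X, aeval_lin ε j, h1, map_one]
      ring
    · rw [AlgHom.comp_apply, hg, MvPolynomial.aeval_X, if_neg hj, hf,
        MvPolynomial.aeval_X, if_neg hj, AlgHom.id_apply]
  have hgf : g.comp f = AlgHom.id F _ := by
    apply MvPolynomial.algHom_ext
    intro j
    by_cases hj : j = i0
    · subst hj
      rw [AlgHom.comp_apply, hf, aeval_if_X, hg, aeval_lin ε j, h1, AlgHom.id_apply,
        map_one]
      ring
    · rw [AlgHom.comp_apply, hf, MvPolynomial.aeval_X, if_neg hj, hg,
        MvPolynomial.aeval_X, if_neg hj, AlgHom.id_apply]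
  let e : MvPolynomial (Fin (k+1)) F ≃ₐ[F] MvPolynomial (Fin (k+1)) F :=
    AlgEquiv.ofAlgHom f g hfg hgf
  have hiff := MulEquiv.prime_iff e.toRingEquiv.toMulEquiv (p := (X i0 : MvPolynomial (Fin (k+1)) F))
  have hx := (prime_X_mv (F := F) i0)
  rw [← hiff] at hx
  have he : e (X i0) = lin ε := by
    show f (X i0) = lin ε
    rw [hf, aeval_if_X]
  rwa [show (e.toRingEquiv.toMulEquiv) (X i0) = e (X i0) from rfl, he] at hx

theorem lin_dvd_det {d : ℕ} (ε : Fin d → F) (i0 : Fin d) (h1 : ε i0 = 1) :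
    lin ε ∣ (Matrix.of fun i j : Fin d =>
        (MvPolynomial.X i : MvPolynomial (Fin d) F) ^ (Fintype.card F) ^ (j : ℕ)).det := by
  have hfact : Fact (ringChar F).Prime := ⟨CharP.char_is_prime F _⟩
  obtain ⟨n, -, hcard⟩ := FiniteField.card F (ringChar F)
  set gneg : Fin d → MvPolynomial (Fin d) F :=
    (fun j => if j = i0 then X i0 - lin ε else X j) with hgneg
  set π : MvPolynomial (Fin d) F →ₐ[F] MvPolynomial (Fin d) F :=
    MvPolynomial.aeval gneg with hπ
  have hgpos : gneg i0 = X i0 - lin ε := by rw [hgneg]; simp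
  have hgne : ∀ j, j ≠ i0 → gneg j = X j := by intro j hj; rw [hgneg]; simp [hj]
  -- key row relation
  have key : ∀ j : ℕ, ∑ i, C (ε i) * (gneg i) ^ (Fintype.card F) ^ j = 0 := by
    intro j
    have hQ : (Fintype.card F) ^ j = (ringChar F) ^ ((n : ℕ) * j) := by
      rw [hcard, ← pow_mul]
    have hlinpow : (lin ε) ^ (Fintype.card F) ^ j =
        ∑ i, C (ε i) * (X i : MvPolynomial (Fin d) F) ^ (Fintype.card F) ^ j := by
      rw [lin, hQ, sum_pow_char_pow]
      refine Finset.sum_congr rfl fun i _ => ?_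
      rw [mul_pow, ← map_pow, ← hQ, FiniteField.pow_card_pow]
    have hterm : ∀ i, C (ε i) * (gneg i) ^ (Fintype.card F) ^ j =
        C (ε i) * (X i : MvPolynomial (Fin d) F) ^ (Fintype.card F) ^ j +
          (if i = i0 then ((X i0 - lin ε) ^ (Fintype.card F) ^ j
              - (X i0 : MvPolynomial (Fin d) F) ^ (Fintype.card F) ^ j)
            else 0) := by
      intro i
      by_cases hi : i = i0
      · subst hi
        rw [hgpos, if_pos rfl, h1, map_one]; ring
      · rw [hgne i hi, if_neg hi]; ring
    rw [Finset.sum_congr rfl fun i _ => hterm i, Finset.sum_add_distrib,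
      Finset.sum_ite_eq' Finset.univ i0, if_pos (Finset.mem_univ _), ← hlinpow,
      hQ, sub_pow_char_pow]
    ring
  -- π kills the determinant
  have hdet0 : π (Matrix.of fun i j : Fin d =>
      (MvPolynomial.X i : MvPolynomial (Fin d) F) ^ (Fintype.card F) ^ (j : ℕ)).det = 0 := by
    have h2 : π (Matrix.of fun i j : Fin d =>
        (MvPolynomial.X i : MvPolynomial (Fin d) F) ^ (Fintype.card F) ^ (j : ℕ)).det =
        ((Matrix.of fun i j : Fin d =>
          (MvPolynomial.X i : MvPolynomial (Fin d) F) ^ (Fintype.card F) ^ (j : ℕ)).map ⇑π).det :=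
      RingHom.map_det π.toRingHom _
    have hmap : (Matrix.of fun i j : Fin d =>
        (MvPolynomial.X i : MvPolynomial (Fin d) F) ^ (Fintype.card F) ^ (j : ℕ)).map ⇑π =
        Matrix.of fun i j : Fin d => (gneg i) ^ (Fintype.card F) ^ (j : ℕ) := by
      ext i j
      simp [Matrix.map_apply, map_pow, hπ]
    rw [h2, hmap, ← Matrix.exists_vecMul_eq_zero_iff]
    refine ⟨fun i => C (ε i), ?_, ?_⟩
    · intro h
      have := congrFun h i0
      rw [h1, map_one] at this
      exact one_ne_zero this
    · funext j
      simpa [Matrix.vecMul, dotProduct] using key (j : ℕ)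
  -- quotient argument
  set I : Ideal (MvPolynomial (Fin d) F) := Ideal.span {lin ε} with hI
  have hlinI : (Ideal.Quotient.mkₐ F I) (lin ε) = 0 := by
    rw [Ideal.Quotient.mkₐ_eq_mk, Ideal.Quotient.eq_zero_iff_mem]
    exact Ideal.subset_span rfl
  have hcomp : (Ideal.Quotient.mkₐ F I).comp π = Ideal.Quotient.mkₐ F I := by
    apply MvPolynomial.algHom_ext
    intro j
    rw [AlgHom.comp_apply, hπ, MvPolynomial.aeval_X]
    by_cases hj : j = i0
    · subst hj
      rw [hgpos, map_sub, hlinI, sub_zero]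
    · rw [hgne j hj]
  have hmk := congrArg (fun f : MvPolynomial (Fin d) F →ₐ[F] _ =>
    f ((Matrix.of fun i j : Fin d =>
      (MvPolynomial.X i : MvPolynomial (Fin d) F) ^ (Fintype.card F) ^ (j : ℕ)).det)) hcomp
  simp only [AlgHom.comp_apply, hdet0, map_zero] at hmk
  rw [← Ideal.mem_span_singleton, ← hI, ← Ideal.Quotient.eq_zero_iff_mem,
    ← Ideal.Quotient.mkₐ_eq_mk (R₁ := F), ← hmk]

theorem eval_lin {d : ℕ} (ε : Fin d → F) (v : Fin d → F) :
    MvPolynomial.eval v (lin ε) = ∑ i, ε i * v i := by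
  simp [lin]

theorem eq_of_lin_dvd {d : ℕ} (ε ε' : Fin d → F)
    (hε : ∃ i : Fin d, ε i = 1 ∧ ∀ j : Fin d, j < i → ε j = 0)
    (hε' : ∃ i : Fin d, ε' i = 1 ∧ ∀ j : Fin d, j < i → ε' j = 0)
    (hdvd : lin ε ∣ lin ε') : ε = ε' := by
  obtain ⟨i0, h0, h0'⟩ := hε
  obtain ⟨i1, h1, h1'⟩ := hε'
  obtain ⟨g, hg⟩ := hdvd
  -- kernel inclusion
  have key : ∀ v : Fin d → F, (∑ i, ε i * v i) = 0 → (∑ i, ε' i * v i) = 0 := by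
    intro v hv
    have := congrArg (MvPolynomial.eval v) hg
    rw [eval_lin, map_mul, eval_lin, hv, zero_mul] at this
    exact this
  -- scaling
  have hsc : ∀ j : Fin d, ε' j = ε' i0 * ε j := by
    intro j
    by_cases hj : j = i0
    · subst hj; rw [h0, mul_one]
    · have hv : (∑ i, ε i * ((if i = j then 1 else 0) + (if i = i0 then -ε j else 0))) = 0 := by
        simp only [mul_add, Finset.sum_add_distrib, mul_ite, mul_one, mul_zero,
          Finset.sum_ite_eq' Finset.univ, if_pos (Finset.mem_univ _)]
        rw [h0]
        ring
      have hv' := key _ hv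
      simp only [mul_add, Finset.sum_add_distrib, mul_ite, mul_one, mul_zero,
        Finset.sum_ite_eq' Finset.univ, if_pos (Finset.mem_univ _)] at hv'
      have : ε' j + ε' i0 * (-ε j) = 0 := hv'
      linear_combination this
  -- pivots agree
  have hne : ε i1 ≠ 0 := by
    intro h
    rw [hsc i1, h, mul_zero] at h1
    exact (one_ne_zero (α := F)) h1.symm
  have hle1 : i0 ≤ i1 := by
    by_contra h
    push_neg at h
    exact hne (h0' i1 h)
  have hle2 : i1 ≤ i0 := by
    by_contra h
    push_neg at h
    have : ε' i0 = 0 := h1' i0 h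
    have hj := hsc i1
    rw [this, zero_mul] at hj
    rw [hj] at h1
    exact (one_ne_zero (α := F)) h1.symm
  have hii : i0 = i1 := le_antisymm hle1 hle2
  have hc : ε' i0 = 1 := by rw [hii]; exact h1
  funext j
  rw [hsc j, hc, one_mul]

theorem det_ne_zero {d : ℕ} :
    (Matrix.of fun i j : Fin d =>
        (MvPolynomial.X i : MvPolynomial (Fin d) F) ^ (Fintype.card F) ^ (j : ℕ)).det ≠ 0 := by
  set q := Fintype.card F with hq
  have hq2 : 2 ≤ q := Fintype.one_lt_card
  set f : Fin d →₀ ℕ := ∑ i : Fin d, Finsupp.single i (q ^ (i : ℕ)) with hfdef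
  have happly : ∀ (a : Fin d → ℕ) (v : Fin d),
      (∑ i : Fin d, Finsupp.single i (a i)) v = a v := by
    intro a v
    rw [Finsupp.finset_sum_apply]
    simp only [Finsupp.single_apply]
    rw [Finset.sum_ite_eq' Finset.univ v a, if_pos (Finset.mem_univ _)]
  have hmono : ∀ σ : Equiv.Perm (Fin d),
      (∏ i : Fin d, (MvPolynomial.X (σ i) : MvPolynomial (Fin d) F) ^ q ^ (i : ℕ)) =
        MvPolynomial.monomial (∑ i : Fin d, Finsupp.single (σ i) (q ^ (i : ℕ))) 1 := by
    intro σ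
    rw [monomial_sum_index, map_one, one_mul]
    refine Finset.prod_congr rfl fun i _ => ?_
    rw [MvPolynomial.X_pow_eq_monomial]
  have hcoeff : MvPolynomial.coeff f
      (Matrix.of fun i j : Fin d =>
        (MvPolynomial.X i : MvPolynomial (Fin d) F) ^ q ^ (j : ℕ)).det = 1 := by
    rw [Matrix.det_apply']
    have hterm : ∀ σ : Equiv.Perm (Fin d),
        MvPolynomial.coeff f (((Equiv.Perm.sign σ : ℤ) : MvPolynomial (Fin d) F) *
          ∏ i : Fin d, (Matrix.of fun i j : Fin d =>
            (MvPolynomial.X i : MvPolynomial (Fin d) F) ^ q ^ (j : ℕ)) (σ i) i) =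
          ((Equiv.Perm.sign σ : ℤ) : F) *
            (if (∑ i : Fin d, Finsupp.single (σ i) (q ^ (i : ℕ))) = f then 1 else 0) := by
      intro σ
      have hint : ((Equiv.Perm.sign σ : ℤ) : MvPolynomial (Fin d) F) =
          MvPolynomial.C ((Equiv.Perm.sign σ : ℤ) : F) := by
        rw [← map_intCast (MvPolynomial.C : F →+* MvPolynomial (Fin d) F)]
      have hof : (∏ i : Fin d, (Matrix.of fun i j : Fin d =>
          (MvPolynomial.X i : MvPolynomial (Fin d) F) ^ q ^ (j : ℕ)) (σ i) i) =
          ∏ i : Fin d, (MvPolynomial.X (σ i) : MvPolynomial (Fin d) F) ^ q ^ (i : ℕ) := rfl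
      rw [hint, MvPolynomial.coeff_C_mul, hof, hmono σ, MvPolynomial.coeff_monomial]
    rw [MvPolynomial.coeff_sum, Finset.sum_congr rfl fun σ _ => hterm σ]
    rw [Finset.sum_eq_single_of_mem (1 : Equiv.Perm (Fin d)) (Finset.mem_univ _)]
    · rw [if_pos, Equiv.Perm.sign_one]
      · norm_num
      · rw [hfdef]
        simp
    · intro σ _ hσ
      rw [if_neg, mul_zero]
      intro hcontr
      apply hσ
      have hres : ∀ v : Fin d, q ^ ((σ.symm v : Fin d) : ℕ) = q ^ (v : ℕ) := by
        intro v
        have hσsum : (∑ i : Fin d, Finsupp.single (σ i) (q ^ (i : ℕ))) =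
            ∑ j : Fin d, Finsupp.single j (q ^ ((σ.symm j : Fin d) : ℕ)) := by
          rw [← Equiv.sum_comp σ (fun j => Finsupp.single j (q ^ ((σ.symm j : Fin d) : ℕ)))]
          refine Finset.sum_congr rfl fun i _ => ?_
          rw [Equiv.symm_apply_apply]
        have := congrArg (fun g : Fin d →₀ ℕ => g v) hcontr
        rw [hσsum] at this
        simpa [happly, hfdef] using this
      have hsymm : σ.symm = 1 := by
        ext v
        exact Nat.pow_right_injective hq2 (hres v)
      have : σ = 1 := by
        rw [← Equiv.symm_symm σ, hsymm]; rfl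
      exact this
  intro h
  rw [h, MvPolynomial.coeff_zero] at hcoeff
  exact zero_ne_one hcoeff

theorem card_filter_pivot (d : ℕ) :
    (Finset.univ.filter (fun ε : Fin d → F =>
        ∃ i : Fin d, ε i = 1 ∧ ∀ j : Fin d, j < i → ε j = 0)).card =
      ∑ i : Fin d, (Fintype.card F) ^ (i : ℕ) := by
  set q := Fintype.card F with hq
  have hsplit : (Finset.univ.filter (fun ε : Fin d → F =>
      ∃ i : Fin d, ε i = 1 ∧ ∀ j : Fin d, j < i → ε j = 0)) =
      Finset.univ.biUnion (fun i : Fin d =>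
        Finset.univ.filter (fun ε : Fin d → F => ε i = 1 ∧ ∀ j : Fin d, j < i → ε j = 0)) := by
    ext ε
    simp only [Finset.mem_filter, Finset.mem_biUnion, Finset.mem_univ, true_and]
  rw [hsplit, Finset.card_biUnion]
  · have hcard : ∀ i : Fin d,
        (Finset.univ.filter (fun ε : Fin d → F =>
          ε i = 1 ∧ ∀ j : Fin d, j < i → ε j = 0)).card = q ^ (d - 1 - (i : ℕ)) := by
      intro i
      rw [← Fintype.card_subtype]
      have e : {ε : Fin d → F // ε i = 1 ∧ ∀ j : Fin d, j < i → ε j = 0} ≃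
          ({j : Fin d // i < j} → F) := by
        refine ⟨fun ε => fun j => ε.1 j.1,
          fun g => ⟨fun j => if h : i < j then g ⟨j, h⟩ else if j = i then 1 else 0, ?_, ?_⟩,
          ?_, ?_⟩
        · simp [lt_irrefl]
        · intro j hj
          show (if h : i < j then g ⟨j, h⟩ else if j = i then 1 else 0) = 0
          rw [dif_neg (not_lt_of_gt hj), if_neg (ne_of_lt hj)]
        · rintro ⟨ε, h1, h2⟩
          apply Subtype.ext
          funext j
          show (if h : i < j then ε j else if j = i then 1 else 0) = ε j
          rcases lt_trichotomy i j with h | h | h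
          · rw [dif_pos h]
          · rw [dif_neg (by rw [h]; exact lt_irrefl j), if_pos h.symm, ← h, h1]
          · rw [dif_neg (not_lt_of_gt h), if_neg (ne_of_lt h), h2 j h]
        · intro g
          funext j
          show (if h : i < (j : Fin d) then g ⟨j, h⟩ else if (j : Fin d) = i then 1 else 0) = g j
          rw [dif_pos j.2]
      rw [Fintype.card_congr e, Fintype.card_fun]
      congr 1
      rw [Fintype.card_subtype]
      have : Finset.univ.filter (fun j : Fin d => i < j) = Finset.Ioi i := by
        ext j; simp [Finset.mem_Ioi]
      rw [this, Fin.card_Ioi]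
    rw [Finset.sum_congr rfl fun i _ => hcard i]
    rw [Fin.sum_univ_eq_sum_range (fun i => q ^ (d - 1 - i)) d,
      Finset.sum_range_reflect (fun i => q ^ i) d,
      ← Fin.sum_univ_eq_sum_range (fun i => q ^ i) d]
  · intro i _ i' _ hne
    rw [Function.onFun, Finset.disjoint_left]
    intro ε hε hε'
    simp only [Finset.mem_filter, Finset.mem_univ, true_and] at hε hε'
    rcases lt_trichotomy i i' with h | h | h
    · rw [hε'.2 i h] at hε; exact one_ne_zero hε.1.symm
    · exact hne h
    · rw [hε.2 i' h] at hε'; exact one_ne_zero hε'.1.symm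

end MooreAux

/-- The Moore determinant `det (b_i ^ q^(j-1))` over a finite field `F` with
`q = |F|` elements factors, as a polynomial in `F[b_1, …, b_d]`, as a nonzero constant times
the product of the linear forms `Σ ε_i b_i` over representatives `ε` of projective space
`P^{d-1}(F_q)` whose first nonzero coordinate equals `1`. -/
theorem moore_det_factorization (F : Type*) [Field F] [Fintype F] (d : ℕ) (hd : 1 ≤ d) :
    ∃ c : F, c ≠ 0 ∧
      (Matrix.of fun i j : Fin d =>
          (MvPolynomial.X i : MvPolynomial (Fin d) F) ^ (Fintype.card F) ^ (j : ℕ)).det =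
        MvPolynomial.C c *
          ∏ ε ∈ Finset.univ.filter (fun ε : Fin d → F =>
              ∃ i : Fin d, ε i = 1 ∧ ∀ j : Fin d, j < i → ε j = 0),
            ∑ i : Fin d, MvPolynomial.C (ε i) * MvPolynomial.X i := by

  obtain ⟨k, rfl⟩ : ∃ k, d = k + 1 := ⟨d - 1, by omega⟩
  set q := Fintype.card F with hq
  set M := (Matrix.of fun i j : Fin (k + 1) =>
    (MvPolynomial.X i : MvPolynomial (Fin (k + 1)) F) ^ q ^ (j : ℕ)) with hM
  set S := Finset.univ.filter (fun ε : Fin (k + 1) → F =>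
    ∃ i : Fin (k + 1), ε i = 1 ∧ ∀ j : Fin (k + 1), j < i → ε j = 0) with hS
  have hprodlin : (∏ ε ∈ S, ∑ i : Fin (k + 1), MvPolynomial.C (ε i) * MvPolynomial.X i) =
      ∏ ε ∈ S, MooreAux.lin ε := rfl
  set P : MvPolynomial (Fin (k + 1)) F := ∏ ε ∈ S, MooreAux.lin ε with hP
  -- basic facts about members of S
  have hmem : ∀ ε ∈ S, ∃ i : Fin (k + 1), ε i = 1 ∧ ∀ j : Fin (k + 1), j < i → ε j = 0 := by
    intro ε hε
    exact (Finset.mem_filter.mp hε).2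
  have hprime : ∀ ε ∈ S, Prime (MooreAux.lin ε) := by
    intro ε hε
    obtain ⟨i0, h1, -⟩ := hmem ε hε
    exact MooreAux.prime_lin ε i0 h1
  have hdvd : ∀ ε ∈ S, MooreAux.lin ε ∣ M.det := by
    intro ε hε
    obtain ⟨i0, h1, -⟩ := hmem ε hε
    exact MooreAux.lin_dvd_det ε i0 h1
  -- product divides the determinant
  have hproddvd : P ∣ M.det := by
    have hinj : ∀ a ∈ S, ∀ b ∈ S,
        Associates.mk (MooreAux.lin a) = Associates.mk (MooreAux.lin b) → a = b := by
      intro a ha b hb hab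
      have hass := Associates.mk_eq_mk_iff_associated.mp hab
      exact MooreAux.eq_of_lin_dvd a b (hmem a ha) (hmem b hb) hass.dvd
    have h1 : ∀ a ∈ S.image (fun ε => Associates.mk (MooreAux.lin ε)), Prime a := by
      intro a ha
      obtain ⟨ε, hε, rfl⟩ := Finset.mem_image.mp ha
      exact Associates.prime_mk.mpr (hprime ε hε)
    have h2 : ∀ a ∈ S.image (fun ε => Associates.mk (MooreAux.lin ε)),
        a ∣ Associates.mk M.det := by
      intro a ha
      obtain ⟨ε, hε, rfl⟩ := Finset.mem_image.mp ha
      exact Associates.mk_dvd_mk.mpr (hdvd ε hε)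
    have h3 := Finset.prod_primes_dvd (Associates.mk M.det) h1 h2
    rw [Finset.prod_image hinj] at h3
    have h4 : (∏ ε ∈ S, Associates.mk (MooreAux.lin ε)) = Associates.mk P := by
      rw [hP]
      symm
      exact map_prod (Associates.mkMonoidHom :
        MvPolynomial (Fin (k + 1)) F →* Associates (MvPolynomial (Fin (k + 1)) F))
        MooreAux.lin S
    rw [h4] at h3
    exact Associates.mk_dvd_mk.mp h3
  obtain ⟨t, ht⟩ := hproddvd
  -- homogeneity
  set N := ∑ i : Fin (k + 1), q ^ (i : ℕ) with hN
  have hMhom : M.det.IsHomogeneous N := by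
    rw [Matrix.det_apply']
    apply MvPolynomial.IsHomogeneous.sum
    intro σ _
    have hint : ((Equiv.Perm.sign σ : ℤ) : MvPolynomial (Fin (k + 1)) F) =
        MvPolynomial.C ((Equiv.Perm.sign σ : ℤ) : F) := by
      rw [← map_intCast (MvPolynomial.C : F →+* MvPolynomial (Fin (k + 1)) F)]
    have hof : (∏ i : Fin (k + 1), M (σ i) i) =
        ∏ i : Fin (k + 1), (MvPolynomial.X (σ i) : MvPolynomial (Fin (k + 1)) F) ^ q ^ (i : ℕ) :=
      rfl
    rw [hint, hof]
    have hhp : (∏ i : Fin (k + 1),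
        (MvPolynomial.X (σ i) : MvPolynomial (Fin (k + 1)) F) ^ q ^ (i : ℕ)).IsHomogeneous N := by
      rw [hN]
      exact MvPolynomial.IsHomogeneous.prod Finset.univ _ _
        (fun i _ => MvPolynomial.isHomogeneous_X_pow (σ i) (q ^ (i : ℕ)))
    have := (MvPolynomial.isHomogeneous_C (Fin (k + 1))
      ((Equiv.Perm.sign σ : ℤ) : F)).mul hhp
    simpa using this
  have hlinhom : ∀ ε : Fin (k + 1) → F, (MooreAux.lin ε).IsHomogeneous 1 := by
    intro ε
    rw [MooreAux.lin]
    have := MvPolynomial.IsHomogeneous.sum Finset.univ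
      (fun i : Fin (k + 1) => MvPolynomial.C (ε i) * MvPolynomial.X i) 1
      (fun i _ => MvPolynomial.isHomogeneous_C_mul_X (ε i) i)
    exact this
  have hPhom : P.IsHomogeneous N := by
    have := MvPolynomial.IsHomogeneous.prod S MooreAux.lin (fun _ => 1)
      (fun ε _ => hlinhom ε)
    have hcard := MooreAux.card_filter_pivot (F := F) (k + 1)
    rw [← hS] at hcard
    simpa [Finset.sum_const, hcard, hN, hq] using this
  -- extract the homogeneous component
  have hsum := MvPolynomial.sum_homogeneousComponent t
  have hdet2 : M.det = ∑ m ∈ Finset.range (t.totalDegree + 1),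
      (MvPolynomial.homogeneousComponent m t) * P := by
    conv_lhs => rw [ht, ← hsum]
    rw [Finset.mul_sum]
    exact Finset.sum_congr rfl fun m _ => mul_comm _ _
  have hL : MvPolynomial.homogeneousComponent N M.det = M.det := by
    rw [MvPolynomial.homogeneousComponent_of_mem
      ((MvPolynomial.mem_homogeneousSubmodule _ _).mpr hMhom), if_pos rfl]
  have hR : MvPolynomial.homogeneousComponent N M.det =
      (MvPolynomial.homogeneousComponent 0 t) * P := by
    rw [hdet2, map_sum]
    have hterm : ∀ m ∈ Finset.range (t.totalDegree + 1),
        MvPolynomial.homogeneousComponent N ((MvPolynomial.homogeneousComponent m t) * P) =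
          if m = 0 then (MvPolynomial.homogeneousComponent m t) * P else 0 := by
      intro m _
      have hmul := (MvPolynomial.homogeneousComponent_isHomogeneous m t).mul hPhom
      rw [MvPolynomial.homogeneousComponent_of_mem
        ((MvPolynomial.mem_homogeneousSubmodule _ _).mpr hmul)]
      congr 1
      simp only [eq_iff_iff]
      omega
    rw [Finset.sum_congr rfl hterm, Finset.sum_ite_eq' (Finset.range (t.totalDegree + 1)) 0
      (fun m => (MvPolynomial.homogeneousComponent m t) * P),
      if_pos (Finset.mem_range.mpr (Nat.succ_pos _))]
  have hdet3 : M.det = MvPolynomial.C (MvPolynomial.coeff 0 t) * P := by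
    rw [← MvPolynomial.homogeneousComponent_zero, ← hR, hL]
  refine ⟨MvPolynomial.coeff 0 t, ?_, ?_⟩
  · intro hc0
    have : M.det = 0 := by rw [hdet3, hc0, map_zero, zero_mul]
    exact MooreAux.det_ne_zero this
  · rw [hprodlin]
    exact hdet3
end

section
/- Let K be an infinite field of characteristic p containing F_q and (D,φ) an étale φ-module over K of dimension d (i.e., the image of φ spans D over K). Then there exists x ∈ D such that (x, φ(x), ..., φ^{d-1}(x)) is a basis of D over K. -/
/-- Multiplication in the skew polynomial ring `K[X,σ]` with `σ x = x ^ q`, so that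
`X * a = a ^ q * X`: `(Σ aᵢXⁱ) ⬝ (Σ bⱼXʲ) = Σ aᵢ bⱼ^(qⁱ) X^(i+j)`.
We use the type `Polynomial K` as the carrier of coefficients. -/
noncomputable def skewMul {K : Type*} [Field K] (q : ℕ) (P Q : Polynomial K) : Polynomial K :=
  ∑ i ∈ P.support, ∑ j ∈ Q.support,
    Polynomial.C (P.coeff i * Q.coeff j ^ q ^ i) * Polynomial.X ^ (i + j)

/-- Evaluation of a skew polynomial `Σ aᵢ Xⁱ` at a semilinear map `φ`, applied to `x`:
`Σ aᵢ • φ^[i] x`. -/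
noncomputable def skewEval {K D : Type*} [Field K] [AddCommGroup D] [Module K D]
    (P : Polynomial K) (φ : D → D) (x : D) : D :=
  ∑ i ∈ P.support, P.coeff i • (φ^[i] x)

/-- `A` right-divides `B` in `K[X,σ]` (σ x = x^q): `B = C ⬝ A` for some `C`. -/
def SkewRightDvd {K : Type*} [Field K] (q : ℕ) (A B : Polynomial K) : Prop :=
  ∃ C : Polynomial K, B = skewMul q C A

/-- `M` is a left lowest common multiple of `U` and `P` in `K[X,σ]`. -/
def IsLlcm {K : Type*} [Field K] (q : ℕ) (M U P : Polynomial K) : Prop :=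
  SkewRightDvd q U M ∧ SkewRightDvd q P M ∧
    ∀ N : Polynomial K, SkewRightDvd q U N → SkewRightDvd q P N → SkewRightDvd q M N

/-- `P` is the minimal (monic, least-degree) skew polynomial annihilating `x`
under the semilinear map `φ`; equivalently the monic generator of the left ideal
`{Q | Q(φ)(x) = 0}`. -/
def IsMinSkew {K D : Type*} [Field K] [AddCommGroup D] [Module K D]
    (P : Polynomial K) (φ : D → D) (x : D) : Prop :=
  P.Monic ∧ skewEval P φ x = 0 ∧
    ∀ Q : Polynomial K, Q ≠ 0 → skewEval Q φ x = 0 → P.natDegree ≤ Q.natDegree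

/-- `P` is irreducible in `K[X,σ]`: nonconstant, and not a product of two skew
polynomials of strictly smaller degree. -/
def IrredSkew {K : Type*} [Field K] (q : ℕ) (P : Polynomial K) : Prop :=
  0 < P.natDegree ∧ ∀ A B : Polynomial K, P = skewMul q A B →
    ¬(A.natDegree < P.natDegree ∧ B.natDegree < P.natDegree)

/-- Two skew polynomials `P`, `Q` are similar: there is `U` with `rgcd(U,P) = 1`
(every common right divisor of `U` and `P` right-divides `1`) and `llcm(U,P) = Q ⬝ U`. -/
def SkewSimilar {K : Type*} [Field K] (q : ℕ) (P Q : Polynomial K) : Prop :=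
  ∃ U : Polynomial K,
    (∀ D : Polynomial K, SkewRightDvd q D U → SkewRightDvd q D P → SkewRightDvd q D 1) ∧
    IsLlcm q (skewMul q Q U) U P

private lemma aux_geom_lt {q : ℕ} (hq : 2 ≤ q) : ∀ r : ℕ, (∑ j ∈ Finset.range r, q ^ j) < q ^ r := by
  intro r
  induction r with
  | zero => simp
  | succ r ih =>
    rw [Finset.sum_range_succ, pow_succ]
    have h1 : q ^ r * 2 ≤ q ^ r * q := Nat.mul_le_mul_left _ hq
    omega

private lemma aux_sum_pow {q r : ℕ} (hq : 2 ≤ q) (s : Finset (Fin (r + 1))) :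
    (∑ i ∈ s, q ^ (i : ℕ)) = q ^ r ↔ s = {Fin.last r} := by
  classical
  constructor
  · intro h
    by_cases hl : Fin.last r ∈ s
    · have h2 := Finset.sum_erase_add s (fun i : Fin (r+1) => q ^ (i : ℕ)) hl
      simp only [Fin.val_last] at h2
      rw [h] at h2
      have h3 : (∑ i ∈ s.erase (Fin.last r), q ^ (i : ℕ)) = 0 := by omega
      have h4 : s.erase (Fin.last r) = ∅ := by
        by_contra hne
        obtain ⟨i, hi⟩ := Finset.nonempty_iff_ne_empty.mpr hne
        have h5 := Finset.sum_eq_zero_iff.mp h3 i hi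
        exact pow_ne_zero (i : ℕ) (by omega : q ≠ 0) h5
      have h6 := Finset.insert_erase hl
      rw [h4] at h6
      simpa using h6.symm
    · exfalso
      have hinj : ∀ x ∈ s, ∀ y ∈ s, (x : ℕ) = (y : ℕ) → x = y := fun x _ y _ hxy => Fin.val_injective hxy
      have hsub : s.image Fin.val ⊆ Finset.range r := by
        intro j hj
        obtain ⟨i, hi, rfl⟩ := Finset.mem_image.mp hj
        have : i ≠ Fin.last r := fun hil => hl (hil ▸ hi)
        exact Finset.mem_range.mpr (Fin.val_lt_last this)
      have hlt : (∑ i ∈ s, q ^ (i : ℕ)) < q ^ r := by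
        calc (∑ i ∈ s, q ^ (i : ℕ)) = ∑ j ∈ s.image Fin.val, q ^ j := (Finset.sum_image hinj).symm
          _ ≤ ∑ j ∈ Finset.range r, q ^ j := Finset.sum_le_sum_of_subset hsub
          _ < q ^ r := aux_geom_lt hq r
      omega
  · rintro rfl
    simp [Fin.val_last]

private lemma aux_dual {K D : Type*} [Field K] [AddCommGroup D] [Module K D]
    {n : ℕ} {v : Fin n → D} (hv : LinearIndependent K v) :
    ∃ ℓ : Fin n → (D →ₗ[K] K), ∀ a b, ℓ a (v b) = if a = b then 1 else 0 := by
  classical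
  let B := Module.Basis.span hv
  choose g hg using fun a : Fin n => LinearMap.exists_extend (B.coord a)
  refine ⟨g, fun a b => ?_⟩
  have hb : v b ∈ Submodule.span K (Set.range v) := Submodule.subset_span ⟨b, rfl⟩
  have h1 : g a (v b) = (B.coord a) ⟨v b, hb⟩ := by
    have h := congrArg (fun (f : _ →ₗ[K] K) => f ⟨v b, hb⟩) (hg a)
    simpa using h
  have h2 : (⟨v b, hb⟩ : Submodule.span K (Set.range v)) = B b :=
    (Module.Basis.span_apply hv b).symm
  rw [h1, h2, Module.Basis.coord_apply, Module.Basis.repr_self, Finsupp.single_apply]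
  rcases eq_or_ne a b with hab | hab
  · simp [hab]
  · rw [if_neg (fun h : b = a => hab h.symm), if_neg hab]

private lemma aux_det_zero {K D : Type*} [Field K] [AddCommGroup D] [Module K D]
    {n : ℕ} {v : Fin n → D} (h : ¬ LinearIndependent K v)
    (ℓ : Fin n → (D →ₗ[K] K)) : (Matrix.of fun b a => ℓ a (v b)).det = 0 := by
  classical
  obtain ⟨g, hsum, i, hi⟩ := Fintype.not_linearIndependent_iff.mp h
  rw [← Matrix.det_transpose, ← Matrix.exists_mulVec_eq_zero_iff]
  refine ⟨g, fun hg => hi (congrFun hg i), ?_⟩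
  funext a
  have h2 : ∑ b, g b * ℓ a (v b) = 0 := by
    have h3 := congrArg (ℓ a) hsum
    simpa [map_sum] using h3
  simpa [Matrix.mulVec, Matrix.transpose_apply, dotProduct, mul_comm] using h2

private lemma aux_dep_of_det {K D : Type*} [Field K] [AddCommGroup D] [Module K D]
    {n : ℕ} {v : Fin n → D}
    (h : ∀ ℓ : Fin n → (D →ₗ[K] K), (Matrix.of fun b a => ℓ a (v b)).det = 0) :
    ¬ LinearIndependent K v := by
  classical
  intro hv
  obtain ⟨ℓ, hℓ⟩ := aux_dual hv
  have h1 := h ℓ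
  have h2 : (Matrix.of fun b a => ℓ a (v b)) = (1 : Matrix (Fin n) (Fin n) K) := by
    ext b a
    rw [Matrix.of_apply, hℓ a b, Matrix.one_apply]
    rcases eq_or_ne a b with hab | hab
    · simp [hab]
    · rw [if_neg hab, if_neg (fun h : b = a => hab h.symm)]
  rw [h2, Matrix.det_one] at h1
  exact one_ne_zero h1

/-- Over an infinite field `K` of characteristic `p` containing `F_q`, any
étale `φ`-module `(D, φ)` of dimension `d` (the image of `φ` spans `D`) admils an element
`x` such that `(x, φ(x), …, φ^{d-1}(x))` is a basis of `D` over `K`. -/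
theorem etale_phi_module_has_generator (K : Type*) [Field K] [Infinite K]
    (p a q : ℕ) (hp : p.Prime) [CharP K p] (ha : 0 < a) (hq : q = p ^ a)
    (hFq : Nat.card {x : K // x ^ q = x} = q)
    (D : Type*) [AddCommGroup D] [Module K D] [FiniteDimensional K D]
    (φ : D → D) (hadd : ∀ x y : D, φ (x + y) = φ x + φ y)
    (hsemi : ∀ (c : K) (x : D), φ (c • x) = c ^ q • φ x)
    (hetale : Submodule.span K (Set.range φ) = ⊤) :
    ∃ x : D,
      LinearIndependent K (fun i : Fin (Module.finrank K D) => φ^[(i : ℕ)] x) ∧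
      Submodule.span K
        (Set.range fun i : Fin (Module.finrank K D) => φ^[(i : ℕ)] x) = ⊤ := by
  classical
  have hq2 : 2 ≤ q := by
    subst hq
    calc 2 ≤ p := hp.two_le
      _ ≤ p ^ a := Nat.le_self_pow (by omega) p
  have h0 : φ 0 = 0 := by
    have h := hadd 0 0
    rw [add_zero] at h
    exact (left_eq_add.mp h)
  have hiadd : ∀ (n : ℕ) (x y : D), φ^[n] (x + y) = φ^[n] x + φ^[n] y := by
    intro n
    induction n with
    | zero => intro x y; simp
    | succ n ih =>
      intro x y
      rw [Function.iterate_succ_apply', Function.iterate_succ_apply',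
        Function.iterate_succ_apply', ih, hadd]
  have hismul : ∀ (n : ℕ) (c : K) (x : D), φ^[n] (c • x) = c ^ (q ^ n) • φ^[n] x := by
    intro n
    induction n with
    | zero => intro c x; simp
    | succ n ih =>
      intro c x
      rw [Function.iterate_succ_apply', Function.iterate_succ_apply', ih, hsemi,
        ← pow_mul, ← pow_succ]
  have hspan : ∀ n : ℕ, Submodule.span K (Set.range (φ^[n])) = ⊤ := by
    intro n
    induction n with
    | zero => simp
    | succ n ih =>
      rw [eq_top_iff, ← hetale, Submodule.span_le]
      rintro _ ⟨z, rfl⟩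
      have hz : z ∈ Submodule.span K (Set.range (φ^[n])) := ih ▸ Submodule.mem_top
      refine Submodule.span_induction
        (p := fun w _ => φ w ∈ Submodule.span K (Set.range (φ^[n + 1]))) ?_ ?_ ?_ ?_ hz
      · rintro _ ⟨m, rfl⟩
        exact Submodule.subset_span ⟨m, (Function.iterate_succ_apply' φ n m)⟩
      · show φ 0 ∈ Submodule.span K (Set.range (φ^[n + 1]))
        rw [h0]; exact Submodule.zero_mem _
      · intro u w _ _ hu hw
        show φ (u + w) ∈ Submodule.span K (Set.range (φ^[n + 1]))
        rw [hadd]; exact Submodule.add_mem _ hu hw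
      · intro c w _ hw
        show φ (c • w) ∈ Submodule.span K (Set.range (φ^[n + 1]))
        rw [hsemi]; exact Submodule.smul_mem _ _ hw
  have key : ∀ r : ℕ, r ≤ Module.finrank K D →
      ∃ x : D, LinearIndependent K (fun i : Fin r => φ^[(i : ℕ)] x) := by
    intro r
    induction r with
    | zero => exact fun _ => ⟨0, linearIndependent_empty_type⟩
    | succ r ih =>
      intro hrd
      obtain ⟨x, hx⟩ := ih (by omega)
      have hWne : Submodule.span K (Set.range fun i : Fin r => φ^[(i : ℕ)] x) ≠ ⊤ := by
        intro hWt
        have hfr := finrank_span_eq_card hx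
        rw [hWt] at hfr
        simp only [finrank_top, Fintype.card_fin] at hfr
        omega
      have hy : ∃ y : D, φ^[r] y ∉
          Submodule.span K (Set.range fun i : Fin r => φ^[(i : ℕ)] x) := by
        by_contra hcon
        push_neg at hcon
        apply hWne
        rw [eq_top_iff, ← hspan r, Submodule.span_le]
        rintro _ ⟨z, rfl⟩
        exact hcon z
      obtain ⟨y, hyW⟩ := hy
      by_contra hcon
      push_neg at hcon
      have hdep : ∀ ℓ : Fin (r + 1) → (D →ₗ[K] K),
          (Matrix.of fun b a =>
            ℓ a ((Fin.snoc (fun i : Fin r => φ^[(i : ℕ)] x) (φ^[r] y) : Fin (r+1) → D) b)).det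
            = 0 := by
        intro ℓ
        set u : Fin (r + 1) → (Fin (r + 1) → K) := fun b a => ℓ a (φ^[(b : ℕ)] x) with hu
        set w : Fin (r + 1) → (Fin (r + 1) → K) := fun b a => ℓ a (φ^[(b : ℕ)] y) with hwdef
        set f := (Matrix.detRowAlternating : (Fin (r + 1) → K) [⋀^Fin (r + 1)]→ₗ[K] K) with hf
        set P : Polynomial K := ∑ s : Finset (Fin (r + 1)),
          Polynomial.C (f (s.piecewise w u)) * Polynomial.X ^ (∑ i ∈ s, q ^ (i : ℕ)) with hP
        have heval : ∀ t : K, P.eval t = 0 := by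
          intro t
          have hdet2 : f.toMultilinearMap
              ((fun b : Fin (r+1) => (t ^ q ^ (b : ℕ)) • w b) + u) = 0 := by
            have heq : ((fun b : Fin (r+1) => (t ^ q ^ (b : ℕ)) • w b) + u)
                = (Matrix.of fun b a =>
                    ℓ a ((fun i : Fin (r+1) => φ^[(i : ℕ)] (x + t • y)) b)) := by
              funext b c
              simp only [Pi.add_apply, Pi.smul_apply, smul_eq_mul, Matrix.of_apply, hu, hwdef]
              rw [hiadd, hismul, map_add, map_smul, smul_eq_mul, add_comm]
            rw [heq]
            exact aux_det_zero (hcon (x + t • y)) ℓ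
          rw [f.toMultilinearMap.map_add_univ] at hdet2
          rw [hP, Polynomial.eval_finset_sum]
          simp only [Polynomial.eval_mul, Polynomial.eval_C, Polynomial.eval_pow,
            Polynomial.eval_X]
          rw [← hdet2]
          apply Finset.sum_congr rfl
          intro s _
          have hpw : s.piecewise (fun b : Fin (r+1) => (t ^ q ^ (b : ℕ)) • w b) u
              = s.piecewise (fun b => (t ^ q ^ (b : ℕ)) • (s.piecewise w u) b)
                  (s.piecewise w u) := by
            funext b
            by_cases hb : b ∈ s <;> simp [Finset.piecewise, hb]
          have hms := f.toMultilinearMap.map_piecewise_smul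
            (fun b : Fin (r+1) => t ^ q ^ (b : ℕ)) (s.piecewise w u) s
          rw [hpw, hms, Finset.prod_pow_eq_pow_sum, smul_eq_mul, mul_comm,
            AlternatingMap.coe_multilinearMap]
        have hP0 : P = 0 := Polynomial.zero_of_eval_zero P heval
        have hc := congrArg (fun Q : Polynomial K => Q.coeff (q ^ r)) hP0
        simp only [hP, Polynomial.finset_sum_coeff, Polynomial.coeff_C_mul,
          Polynomial.coeff_X_pow, Polynomial.coeff_zero] at hc
        rw [Finset.sum_eq_single ({Fin.last r} : Finset (Fin (r + 1)))] at hc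
        · have hcl : f (({Fin.last r} : Finset (Fin (r + 1))).piecewise w u) = 0 := by
            have hν : (∑ i ∈ ({Fin.last r} : Finset (Fin (r + 1))), q ^ (i : ℕ)) = q ^ r := by
              simp [Fin.val_last]
            rw [hν, if_pos rfl, mul_one] at hc
            exact hc
          have hrow : (({Fin.last r} : Finset (Fin (r + 1))).piecewise w u)
              = fun b a => ℓ a ((Fin.snoc (fun i : Fin r => φ^[(i : ℕ)] x)
                  (φ^[r] y) : Fin (r+1) → D) b) := by
            funext b
            refine Fin.lastCases ?_ ?_ b
            · funext c
              simp [Finset.piecewise, hwdef, Fin.snoc_last, Fin.val_last]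
            · intro i
              funext c
              have hne : (Fin.castSucc i) ∉ ({Fin.last r} : Finset (Fin (r + 1))) := by
                simp [Fin.ne_of_lt (Fin.castSucc_lt_last i)]
              simp [Finset.piecewise, hne, hu, Fin.snoc_castSucc,
                Fin.ne_of_lt (Fin.castSucc_lt_last i)]
          rw [hrow] at hcl
          exact hcl
        · intro s _ hs
          have hν : (∑ i ∈ s, q ^ (i : ℕ)) ≠ q ^ r :=
            fun h => hs ((aux_sum_pow hq2 s).mp h)
          rw [if_neg (fun h => hν h.symm), mul_zero]
        · intro habs
          exact absurd (Finset.mem_univ _) habs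
      have hnind := aux_dep_of_det hdep
      rw [linearIndependent_fin_snoc] at hnind
      exact hnind ⟨hx, hyW⟩
  obtain ⟨x, hx⟩ := key (Module.finrank K D) le_rfl
  exact ⟨x, hx, hx.span_eq_top_of_card_eq_finrank' (by simp)⟩
end

section
/- Let 0 → D_1 → D → D_2 → 0 be an exact sequence of φ-modules over a field K of characteristic p containing F_q, and suppose x ∈ D generates D (i.e., x, φ(x), ..., φ^{d-1}(x) is a basis where d = dim D). Let x̄ be the image of x in D_2 and x_1 = χ_{φ_2,x̄}(φ)(x) ∈ D_1. Then x̄ generates D_2, x_1 generates D_1, and χ_{φ,x} = χ_{φ_1,x_1} · χ_{φ_2,x̄} in K[X,σ]. -/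
open Polynomial Finset Module



section Helpers
variable {K : Type*} [Field K] {V : Type*} [AddCommGroup V] [Module K V]

lemma skewEval_eq_sum_range {P : Polynomial K} {n : ℕ} (h : ∀ i, n ≤ i → P.coeff i = 0)
    (φ : V → V) (x : V) :
    skewEval P φ x = ∑ i ∈ Finset.range n, P.coeff i • (φ^[i] x) := by
  unfold skewEval
  apply Finset.sum_subset
  · intro i hi
    simp only [Finset.mem_range]
    by_contra hc
    exact (Polynomial.mem_support_iff.mp hi) (h i (not_lt.mp hc))
  · intro i _ hi
    rw [Polynomial.notMem_support_iff.mp hi, zero_smul]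

lemma skewEval_zero (φ : V → V) (x : V) : skewEval (0 : Polynomial K) φ x = 0 := by
  simp [skewEval]

lemma skewEval_add (P Q : Polynomial K) (φ : V → V) (x : V) :
    skewEval (P + Q) φ x = skewEval P φ x + skewEval Q φ x := by
  set n := max P.natDegree Q.natDegree + 1 with hn
  have hP : ∀ i, n ≤ i → P.coeff i = 0 := fun i hi =>
    Polynomial.coeff_eq_zero_of_natDegree_lt (by omega)
  have hQ : ∀ i, n ≤ i → Q.coeff i = 0 := fun i hi =>
    Polynomial.coeff_eq_zero_of_natDegree_lt (by omega)
  have hPQ : ∀ i, n ≤ i → (P + Q).coeff i = 0 := fun i hi => by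
    rw [Polynomial.coeff_add, hP i hi, hQ i hi, add_zero]
  rw [skewEval_eq_sum_range hP, skewEval_eq_sum_range hQ, skewEval_eq_sum_range hPQ,
    ← Finset.sum_add_distrib]
  exact Finset.sum_congr rfl fun i _ => by rw [Polynomial.coeff_add, add_smul]

lemma skewEval_sub (P Q : Polynomial K) (φ : V → V) (x : V) :
    skewEval (P - Q) φ x = skewEval P φ x - skewEval Q φ x := by
  set n := max P.natDegree Q.natDegree + 1 with hn
  have hP : ∀ i, n ≤ i → P.coeff i = 0 := fun i hi =>
    Polynomial.coeff_eq_zero_of_natDegree_lt (by omega)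
  have hQ : ∀ i, n ≤ i → Q.coeff i = 0 := fun i hi =>
    Polynomial.coeff_eq_zero_of_natDegree_lt (by omega)
  have hPQ : ∀ i, n ≤ i → (P - Q).coeff i = 0 := fun i hi => by
    rw [Polynomial.coeff_sub, hP i hi, hQ i hi, sub_zero]
  rw [skewEval_eq_sum_range hP, skewEval_eq_sum_range hQ, skewEval_eq_sum_range hPQ,
    ← Finset.sum_sub_distrib]
  exact Finset.sum_congr rfl fun i _ => by rw [Polynomial.coeff_sub, sub_smul]

lemma skewEval_monomial (c : K) (n : ℕ) (φ : V → V) (x : V) :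
    skewEval (Polynomial.C c * Polynomial.X ^ n) φ x = c • (φ^[n] x) := by
  by_cases hc : c = 0
  · simp [hc, skewEval_zero]
  · have h : ∀ i, n + 1 ≤ i → (Polynomial.C c * Polynomial.X ^ n).coeff i = 0 := fun i hi => by
      rw [Polynomial.coeff_C_mul, Polynomial.coeff_X_pow, if_neg (by omega), mul_zero]
    rw [skewEval_eq_sum_range h]
    rw [Finset.sum_eq_single n]
    · simp
    · intro b _ hb
      simp [Polynomial.coeff_C_mul, Polynomial.coeff_X_pow, hb]
    · intro h; exact absurd (Finset.self_mem_range_succ n) h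

lemma skewEval_finset_sum {ι : Type*} (s : Finset ι) (f : ι → Polynomial K)
    (φ : V → V) (x : V) :
    skewEval (∑ k ∈ s, f k) φ x = ∑ k ∈ s, skewEval (f k) φ x := by
  induction s using Finset.cons_induction with
  | empty => simp [skewEval_zero]
  | cons a s ha ih => rw [Finset.sum_cons, skewEval_add, ih, Finset.sum_cons]

lemma skewEval_C_mul (c : K) (P : Polynomial K) (φ : V → V) (x : V) :
    skewEval (Polynomial.C c * P) φ x = c • skewEval P φ x := by
  have h : ∀ i, P.natDegree + 1 ≤ i → (Polynomial.C c * P).coeff i = 0 := fun i hi => by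
    rw [Polynomial.coeff_C_mul, Polynomial.coeff_eq_zero_of_natDegree_lt (by omega), mul_zero]
  have h' : ∀ i, P.natDegree + 1 ≤ i → P.coeff i = 0 := fun i hi =>
    Polynomial.coeff_eq_zero_of_natDegree_lt (by omega)
  rw [skewEval_eq_sum_range h, skewEval_eq_sum_range h', Finset.smul_sum]
  exact Finset.sum_congr rfl fun i _ => by rw [Polynomial.coeff_C_mul, smul_smul]

end Helpers


section Iter
variable {K : Type*} [Field K] {q : ℕ} {V : Type*} [AddCommGroup V] [Module K V]
  {φ : V → V}

lemma iter_add (hadd : ∀ x y : V, φ (x + y) = φ x + φ y) (n : ℕ) (x y : V) :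
    φ^[n] (x + y) = φ^[n] x + φ^[n] y := by
  induction n generalizing x y with
  | zero => simp
  | succ n ih =>
    rw [Function.iterate_succ_apply, Function.iterate_succ_apply,
      Function.iterate_succ_apply, hadd, ih]

lemma map_zero_of_add (hadd : ∀ x y : V, φ (x + y) = φ x + φ y) : φ 0 = 0 := by
  have h := hadd 0 0
  rw [add_zero] at h
  have : φ 0 + φ 0 = φ 0 + 0 := by rw [add_zero]; exact h.symm
  exact add_left_cancel this

lemma iter_zero_pt (hadd : ∀ x y : V, φ (x + y) = φ x + φ y) (n : ℕ) :
    φ^[n] (0 : V) = 0 := by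
  induction n with
  | zero => simp
  | succ n ih => rw [Function.iterate_succ_apply, map_zero_of_add hadd, ih]

lemma iter_smul (hadd : ∀ x y : V, φ (x + y) = φ x + φ y)
    (hsemi : ∀ (c : K) (x : V), φ (c • x) = c ^ q • φ x) (n : ℕ) (c : K) (x : V) :
    φ^[n] (c • x) = c ^ (q ^ n) • φ^[n] x := by
  induction n generalizing c x with
  | zero => simp
  | succ n ih =>
    rw [Function.iterate_succ_apply, hsemi, ih, Function.iterate_succ_apply, ← pow_mul,
      ← pow_succ']

lemma iter_sum (hadd : ∀ x y : V, φ (x + y) = φ x + φ y) {ι : Type*} (s : Finset ι)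
    (f : ι → V) (n : ℕ) : φ^[n] (∑ i ∈ s, f i) = ∑ i ∈ s, φ^[n] (f i) := by
  induction s using Finset.cons_induction with
  | empty => simp [iter_zero_pt hadd]
  | cons a s ha ih => rw [Finset.sum_cons, iter_add hadd, ih, Finset.sum_cons]

lemma skewEval_skewMul (hadd : ∀ x y : V, φ (x + y) = φ x + φ y)
    (hsemi : ∀ (c : K) (x : V), φ (c • x) = c ^ q • φ x)
    (A B : Polynomial K) (x : V) :
    skewEval (skewMul q A B) φ x = skewEval A φ (skewEval B φ x) := by
  have key : ∀ i ∈ A.support,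
      skewEval (∑ j ∈ B.support,
          Polynomial.C (A.coeff i * B.coeff j ^ q ^ i) * Polynomial.X ^ (i + j)) φ x
      = A.coeff i • φ^[i] (skewEval B φ x) := by
    intro i _
    rw [skewEval_finset_sum,
      Finset.sum_congr rfl fun j (hj : j ∈ B.support) => skewEval_monomial _ _ φ x]
    unfold skewEval
    rw [iter_sum hadd, Finset.smul_sum]
    refine Finset.sum_congr rfl fun j hj => ?_
    rw [iter_smul hadd hsemi, ← Function.iterate_add_apply, smul_smul]
  unfold skewMul
  rw [skewEval_finset_sum, Finset.sum_congr rfl key]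
  simp only [skewEval]


end Iter


section Coeff
variable {K : Type*} [Field K] {q : ℕ}

lemma skewMul_coeff (hq0 : 0 < q) (A B : Polynomial K) (n : ℕ) :
    (skewMul q A B).coeff n
      = ∑ i ∈ Finset.range (n + 1), A.coeff i * B.coeff (n - i) ^ q ^ i := by
  have hqi : ∀ i : ℕ, q ^ i ≠ 0 := fun i => (pow_pos hq0 i).ne'
  unfold skewMul
  rw [Polynomial.finset_sum_coeff]
  simp only [Polynomial.finset_sum_coeff, Polynomial.coeff_C_mul, Polynomial.coeff_X_pow,
    mul_ite, mul_one, mul_zero]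
  set f : ℕ → ℕ → K := fun i j => if n = i + j then A.coeff i * B.coeff j ^ q ^ i else 0
    with hf
  have hinner : ∀ i : ℕ, (∑ j ∈ B.support, f i j) = ∑ j ∈ Finset.range (n + 1), f i j := by
    intro i
    have e1 : (∑ j ∈ B.support, f i j) = ∑ j ∈ B.support ∪ Finset.range (n + 1), f i j := by
      apply Finset.sum_subset Finset.subset_union_left
      intro j _ hj
      simp only [hf]
      rw [Polynomial.notMem_support_iff.mp hj, zero_pow (hqi i), mul_zero, ite_self]
    have e2 : (∑ j ∈ Finset.range (n + 1), f i j)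
        = ∑ j ∈ B.support ∪ Finset.range (n + 1), f i j := by
      apply Finset.sum_subset Finset.subset_union_right
      intro j hj hj'
      simp only [Finset.mem_range, not_lt] at hj'
      simp only [hf]
      rw [if_neg (by omega)]
    rw [e1, ← e2]
  rw [Finset.sum_congr rfl fun i _ => hinner i]
  have houter : (∑ i ∈ A.support, ∑ j ∈ Finset.range (n + 1), f i j)
      = ∑ i ∈ Finset.range (n + 1), ∑ j ∈ Finset.range (n + 1), f i j := by
    have e1 : (∑ i ∈ A.support, ∑ j ∈ Finset.range (n + 1), f i j)
        = ∑ i ∈ A.support ∪ Finset.range (n + 1), ∑ j ∈ Finset.range (n + 1), f i j := by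
      apply Finset.sum_subset Finset.subset_union_left
      intro i _ hi
      apply Finset.sum_eq_zero
      intro j _
      simp only [hf]
      rw [Polynomial.notMem_support_iff.mp hi, zero_mul, ite_self]
    have e2 : (∑ i ∈ Finset.range (n + 1), ∑ j ∈ Finset.range (n + 1), f i j)
        = ∑ i ∈ A.support ∪ Finset.range (n + 1), ∑ j ∈ Finset.range (n + 1), f i j := by
      apply Finset.sum_subset Finset.subset_union_right
      intro i hi hi'
      simp only [Finset.mem_range, not_lt] at hi'
      apply Finset.sum_eq_zero
      intro j _
      simp only [hf]
      rw [if_neg (by omega)]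
    rw [e1, ← e2]
  rw [houter]
  refine Finset.sum_congr rfl fun i hi => ?_
  simp only [Finset.mem_range] at hi
  rw [Finset.sum_eq_single (n - i)]
  · simp only [hf]; rw [if_pos (by omega)]
  · intro b _ hb
    simp only [hf]; rw [if_neg (by omega)]
  · intro h
    exact absurd (Finset.mem_range.mpr (by omega)) h

lemma skewMul_zero_left (B : Polynomial K) : skewMul q 0 B = 0 := by
  simp [skewMul]

lemma skewMul_add_left (hq0 : 0 < q) (A A' B : Polynomial K) :
    skewMul q (A + A') B = skewMul q A B + skewMul q A' B := by
  ext n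
  rw [Polynomial.coeff_add, skewMul_coeff hq0, skewMul_coeff hq0, skewMul_coeff hq0,
    ← Finset.sum_add_distrib]
  exact Finset.sum_congr rfl fun i _ => by rw [Polynomial.coeff_add, add_mul]

lemma skewMul_one_right (hq0 : 0 < q) (A : Polynomial K) : skewMul q A 1 = A := by
  have hqi : ∀ i : ℕ, q ^ i ≠ 0 := fun i => (pow_pos hq0 i).ne'
  ext n
  rw [skewMul_coeff hq0]
  rw [Finset.sum_eq_single n]
  · simp
  · intro b hb' hb
    simp only [Finset.mem_range] at hb'
    rw [Polynomial.coeff_one, if_neg (by omega), zero_pow (hqi b), mul_zero]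
  · intro h; exact absurd (Finset.self_mem_range_succ n) h

lemma skewMul_natDegree_le (hq0 : 0 < q) (A B : Polynomial K) :
    (skewMul q A B).natDegree ≤ A.natDegree + B.natDegree := by
  have hqi : ∀ i : ℕ, q ^ i ≠ 0 := fun i => (pow_pos hq0 i).ne'
  rw [Polynomial.natDegree_le_iff_coeff_eq_zero]
  intro N hN
  rw [skewMul_coeff hq0]
  apply Finset.sum_eq_zero
  intro i _
  by_cases hi : A.natDegree < i
  · rw [Polynomial.coeff_eq_zero_of_natDegree_lt hi, zero_mul]
  · rw [Polynomial.coeff_eq_zero_of_natDegree_lt (p := B) (by omega), zero_pow (hqi i),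
      mul_zero]

lemma skewMul_coeff_top (hq0 : 0 < q) (A B : Polynomial K) :
    (skewMul q A B).coeff (A.natDegree + B.natDegree)
      = A.leadingCoeff * B.leadingCoeff ^ q ^ A.natDegree := by
  have hqi : ∀ i : ℕ, q ^ i ≠ 0 := fun i => (pow_pos hq0 i).ne'
  rw [skewMul_coeff hq0]
  rw [Finset.sum_eq_single A.natDegree]
  · rw [Nat.add_sub_cancel_left]; rfl
  · intro b _ hb
    by_cases hib : A.natDegree < b
    · rw [Polynomial.coeff_eq_zero_of_natDegree_lt hib, zero_mul]
    · rw [Polynomial.coeff_eq_zero_of_natDegree_lt (p := B) (by omega), zero_pow (hqi b),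
        mul_zero]
  · intro h; exact absurd (Finset.mem_range.mpr (by omega)) h

lemma skewMul_monic (hq0 : 0 < q) {A B : Polynomial K} (hA : A.Monic) (hB : B.Monic) :
    (skewMul q A B).Monic ∧ (skewMul q A B).natDegree = A.natDegree + B.natDegree := by
  have htop : (skewMul q A B).coeff (A.natDegree + B.natDegree) = 1 := by
    rw [skewMul_coeff_top hq0, Polynomial.Monic.leadingCoeff hA,
      Polynomial.Monic.leadingCoeff hB, one_pow, one_mul]
  have hdeg : (skewMul q A B).natDegree = A.natDegree + B.natDegree :=
    le_antisymm (skewMul_natDegree_le hq0 A B)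
      (Polynomial.le_natDegree_of_ne_zero (htop ▸ one_ne_zero))
  refine ⟨?_, hdeg⟩
  unfold Polynomial.Monic Polynomial.leadingCoeff
  rw [hdeg, htop]

lemma skewMul_monomial_left_coeff (hq0 : 0 < q) (c : K) (k : ℕ) (B : Polynomial K) (t : ℕ) :
    (skewMul q (Polynomial.C c * Polynomial.X ^ k) B).coeff t
      = if k ≤ t then c * B.coeff (t - k) ^ q ^ k else 0 := by
  rw [skewMul_coeff hq0]
  by_cases hk : k ≤ t
  · rw [if_pos hk, Finset.sum_eq_single k]
    · rw [Polynomial.coeff_C_mul, Polynomial.coeff_X_pow, if_pos rfl, mul_one]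
    · intro b _ hb
      rw [Polynomial.coeff_C_mul, Polynomial.coeff_X_pow, if_neg hb, mul_zero, zero_mul]
    · intro h; exact absurd (Finset.mem_range.mpr (by omega)) h
  · rw [if_neg hk]
    apply Finset.sum_eq_zero
    intro i hi
    simp only [Finset.mem_range] at hi
    rw [Polynomial.coeff_C_mul, Polynomial.coeff_X_pow, if_neg (by omega), mul_zero, zero_mul]

lemma skew_div (hq0 : 0 < q) (B : Polynomial K) (hB : B.Monic) (Q : Polynomial K) :
    ∃ A R : Polynomial K, Q = skewMul q A B + R ∧ (R = 0 ∨ R.natDegree < B.natDegree) := by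
  by_cases he : B.natDegree = 0
  · have hB1 : B = 1 := Polynomial.Monic.natDegree_eq_zero hB |>.mp he
    exact ⟨Q, 0, by rw [hB1, skewMul_one_right hq0, add_zero], Or.inl rfl⟩
  · have he' : 0 < B.natDegree := Nat.pos_of_ne_zero he
    suffices h : ∀ n, ∀ Q : Polynomial K, Q.natDegree ≤ n →
        ∃ A R : Polynomial K, Q = skewMul q A B + R ∧ R.natDegree < B.natDegree by
      obtain ⟨A, R, h1, h2⟩ := h Q.natDegree Q le_rfl
      exact ⟨A, R, h1, Or.inr h2⟩
    intro n
    induction n using Nat.strong_induction_on with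
    | _ n ih =>
      intro Q hQn
      by_cases hlt : Q.natDegree < B.natDegree
      · exact ⟨0, Q, by rw [skewMul_zero_left, zero_add], hlt⟩
      push_neg at hlt
      have hqi : ∀ i : ℕ, q ^ i ≠ 0 := fun i => (pow_pos hq0 i).ne'
      have hQ0 : Q ≠ 0 := by
        intro h
        rw [h, Polynomial.natDegree_zero] at hlt
        omega
      set e := B.natDegree with hee
      set m := Q.natDegree with hm
      set c := Q.leadingCoeff with hc
      set k := m - e with hk
      set M := skewMul q (Polynomial.C c * Polynomial.X ^ k) B with hM
      have hMm : M.coeff m = c := by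
        rw [hM, skewMul_monomial_left_coeff hq0, if_pos (by omega),
          show m - k = e by omega, Polynomial.Monic.coeff_natDegree hB, one_pow, mul_one]
      have hMhigh : ∀ t, m < t → M.coeff t = 0 := by
        intro t ht
        rw [hM, skewMul_monomial_left_coeff hq0]
        by_cases hkt : k ≤ t
        · rw [if_pos hkt, Polynomial.coeff_eq_zero_of_natDegree_lt (p := B) (by omega),
            zero_pow (hqi k), mul_zero]
        · rw [if_neg hkt]
      have hQM : ∀ t, m ≤ t → (Q - M).coeff t = 0 := by
        intro t ht
        rcases eq_or_lt_of_le ht with h | h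
        · rw [Polynomial.coeff_sub, ← h, hMm]
          have : Q.coeff m = c := rfl
          rw [this, sub_self]
        · rw [Polynomial.coeff_sub, Polynomial.coeff_eq_zero_of_natDegree_lt h,
            hMhigh t h, sub_self]
      have hQMdeg : (Q - M).natDegree ≤ m - 1 := by
        rw [Polynomial.natDegree_le_iff_coeff_eq_zero]
        intro N hN
        exact hQM N (by omega)
      obtain ⟨A, R, h1, h2⟩ := ih (m - 1) (by omega) (Q - M) hQMdeg
      refine ⟨A + Polynomial.C c * Polynomial.X ^ k, R, ?_, h2⟩
      rw [skewMul_add_left hq0, ← hM]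
      have h3 : Q = skewMul q A B + R + M := by
        rw [← h1]; ring
      rw [h3]; ring

end Coeff


section Gen
variable {K : Type*} [Field K] {q : ℕ} {V W : Type*} [AddCommGroup V] [Module K V]
  [AddCommGroup W] [Module K W]

lemma skewEval_zero_pt {φ : V → V} (hadd : ∀ x y : V, φ (x + y) = φ x + φ y)
    (P : Polynomial K) : skewEval P φ (0 : V) = 0 := by
  unfold skewEval
  exact Finset.sum_eq_zero fun i _ => by rw [iter_zero_pt hadd, smul_zero]

lemma skewEval_mem_span (P : Polynomial K) (φ : V → V) (v : V) :
    skewEval P φ v ∈ Submodule.span K (Set.range fun i : ℕ => φ^[i] v) := by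
  unfold skewEval
  exact Submodule.sum_mem _ fun i _ =>
    Submodule.smul_mem _ _ (Submodule.subset_span ⟨i, rfl⟩)

lemma commute_iter {f : V →ₗ[K] W} {φ : V → V} {ψ : W → W}
    (hc : ∀ v, f (φ v) = ψ (f v)) (n : ℕ) (v : V) : f (φ^[n] v) = ψ^[n] (f v) := by
  induction n with
  | zero => simp
  | succ n ih =>
    rw [Function.iterate_succ_apply', Function.iterate_succ_apply', hc, ih]

lemma commute_skewEval {f : V →ₗ[K] W} {φ : V → V} {ψ : W → W}
    (hc : ∀ v, f (φ v) = ψ (f v)) (P : Polynomial K) (v : V) :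
    f (skewEval P φ v) = skewEval P ψ (f v) := by
  unfold skewEval
  rw [map_sum]
  exact Finset.sum_congr rfl fun i _ => by rw [map_smul, commute_iter hc]

lemma eq_zero_of_skewEval_eq_zero {d : ℕ} {φ : V → V} {x : V}
    (hind : LinearIndependent K (fun i : Fin d => φ^[(i : ℕ)] x))
    {Q : Polynomial K} (hdeg : ∀ i, d ≤ i → Q.coeff i = 0)
    (hev : skewEval Q φ x = 0) : Q = 0 := by
  have hsum : ∑ i : Fin d, Q.coeff (i : ℕ) • φ^[(i : ℕ)] x = 0 := by
    rw [Fin.sum_univ_eq_sum_range (fun i => Q.coeff i • φ^[i] x) d,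
      ← skewEval_eq_sum_range hdeg, hev]
  have hz := Fintype.linearIndependent_iff.mp hind (fun i => Q.coeff (i : ℕ)) hsum
  ext n
  by_cases hn : n < d
  · exact hz ⟨n, hn⟩
  · rw [hdeg n (le_of_not_gt hn), Polynomial.coeff_zero]

lemma gen_lemma [FiniteDimensional K V] {φ : V → V}
    (hadd : ∀ x y : V, φ (x + y) = φ x + φ y)
    (hsemi : ∀ (c : K) (x : V), φ (c • x) = c ^ q • φ x)
    (v : V)
    (hspan : ⊤ ≤ Submodule.span K (Set.range fun i : ℕ => φ^[i] v))
    {χ : Polynomial K} (hχ : IsMinSkew χ φ v) :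
    χ.natDegree = Module.finrank K V ∧
      LinearIndependent K (fun i : Fin (Module.finrank K V) => φ^[(i : ℕ)] v) := by
  set m := χ.natDegree with hm
  have hind : LinearIndependent K (fun i : Fin m => φ^[(i : ℕ)] v) := by
    rw [Fintype.linearIndependent_iff]
    intro g hg
    by_contra hgc
    push_neg at hgc
    obtain ⟨j, hj⟩ := hgc
    have hm0 : 0 < m := Nat.pos_of_ne_zero fun h => (h ▸ j).elim0
    set Q : Polynomial K := ∑ i : Fin m, Polynomial.C (g i) * Polynomial.X ^ (i : ℕ) with hQ
    have hQc : ∀ t : Fin m, Q.coeff (t : ℕ) = g t := by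
      intro t
      rw [hQ, Polynomial.finset_sum_coeff, Finset.sum_eq_single t]
      · rw [Polynomial.coeff_C_mul, Polynomial.coeff_X_pow, if_pos rfl, mul_one]
      · intro b _ hb
        rw [Polynomial.coeff_C_mul, Polynomial.coeff_X_pow,
          if_neg (fun h => hb (Fin.ext h.symm)), mul_zero]
      · simp
    have hQhigh : ∀ t, m ≤ t → Q.coeff t = 0 := by
      intro t ht
      rw [hQ, Polynomial.finset_sum_coeff]
      apply Finset.sum_eq_zero
      intro b _
      rw [Polynomial.coeff_C_mul, Polynomial.coeff_X_pow,
        if_neg (by have := b.isLt; omega), mul_zero]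
    have hQne : Q ≠ 0 := fun h => hj (by rw [← hQc j, h, Polynomial.coeff_zero])
    have hQev : skewEval Q φ v = 0 := by
      rw [hQ, skewEval_finset_sum, ← hg]
      exact Finset.sum_congr rfl fun i _ => skewEval_monomial _ _ _ _
    have hle := hχ.2.2 Q hQne hQev
    have hQdeg : Q.natDegree ≤ m - 1 :=
      Polynomial.natDegree_le_iff_coeff_eq_zero.mpr fun N hN => hQhigh N (by omega)
    omega
  have hspan2 : ⊤ ≤ Submodule.span K (Set.range fun i : Fin m => φ^[(i : ℕ)] v) := by
    set T := Submodule.span K (Set.range fun i : Fin m => φ^[(i : ℕ)] v) with hT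
    have hmem : ∀ n : ℕ, φ^[n] v ∈ T := by
      intro n
      induction n using Nat.strong_induction_on with
      | _ n ih =>
        by_cases hn : n < m
        · exact Submodule.subset_span ⟨⟨n, hn⟩, rfl⟩
        · push_neg at hn
          have hev := hχ.2.1
          rw [skewEval_eq_sum_range (n := m + 1)
            (fun i hi => Polynomial.coeff_eq_zero_of_natDegree_lt (by omega))] at hev
          have happly := congrArg (φ^[n - m]) hev
          rw [iter_sum hadd, iter_zero_pt hadd] at happly
          rw [Finset.sum_congr rfl (fun i (_ : i ∈ Finset.range (m + 1)) => by
            rw [iter_smul hadd hsemi, ← Function.iterate_add_apply] :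
            ∀ i ∈ Finset.range (m + 1), φ^[n - m] (χ.coeff i • φ^[i] v)
              = χ.coeff i ^ q ^ (n - m) • φ^[n - m + i] v)] at happly
          rw [Finset.sum_range_succ] at happly
          have hmono : χ.coeff m = 1 := hχ.1.coeff_natDegree
          rw [hmono, one_pow, one_smul, show n - m + m = n by omega] at happly
          rw [eq_neg_of_add_eq_zero_right happly]
          apply Submodule.neg_mem
          apply Submodule.sum_mem
          intro i hi
          simp only [Finset.mem_range] at hi
          exact Submodule.smul_mem _ _ (ih (n - m + i) (by omega))
    refine le_trans hspan (Submodule.span_le.mpr ?_)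
    rintro _ ⟨n, rfl⟩
    exact hmem n
  have hb := Basis.mk hind hspan2
  have hfr : Module.finrank K V = m := by
    rw [Module.finrank_eq_card_basis hb, Fintype.card_fin]
  refine ⟨hfr.symm, ?_⟩
  rw [hfr]
  exact hind

end Gen

/-- Given an exact sequence `0 → D₁ → D → D₂ → 0` of `φ`-modules over `K` and
a generator `x` of `D`, with `x̄ = π x` its image in `D₂` and `x₁ = χ_{φ₂,x̄}(φ)(x) ∈ D₁`
(written `ι y₁ = χ_{φ₂,x̄}(φ)(x)`), the element `x̄` generates `D₂`, `y₁` generates `D₁`,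
and `χ_{φ,x} = χ_{φ₁,y₁} ⬝ χ_{φ₂,x̄}` in `K[X,σ]`. -/
theorem semichar_of_exact_sequence (K : Type*) [Field K]
    (p a q : ℕ) (hp : p.Prime) [CharP K p] (ha : 0 < a) (hq : q = p ^ a)
    (hFq : Nat.card {x : K // x ^ q = x} = q)
    (D₁ D D₂ : Type*)
    [AddCommGroup D₁] [Module K D₁] [FiniteDimensional K D₁]
    [AddCommGroup D] [Module K D] [FiniteDimensional K D]
    [AddCommGroup D₂] [Module K D₂] [FiniteDimensional K D₂]
    (ι : D₁ →ₗ[K] D) (π : D →ₗ[K] D₂)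
    (hι : Function.Injective ι) (hπ : Function.Surjective π)
    (hexact : LinearMap.range ι = LinearMap.ker π)
    (φ₁ : D₁ → D₁) (φ : D → D) (φ₂ : D₂ → D₂)
    (hadd₁ : ∀ x y : D₁, φ₁ (x + y) = φ₁ x + φ₁ y)
    (hsemi₁ : ∀ (c : K) (x : D₁), φ₁ (c • x) = c ^ q • φ₁ x)
    (hadd : ∀ x y : D, φ (x + y) = φ x + φ y)
    (hsemi : ∀ (c : K) (x : D), φ (c • x) = c ^ q • φ x)
    (hadd₂ : ∀ x y : D₂, φ₂ (x + y) = φ₂ x + φ₂ y)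
    (hsemi₂ : ∀ (c : K) (x : D₂), φ₂ (c • x) = c ^ q • φ₂ x)
    (hcomm₁ : ∀ y : D₁, ι (φ₁ y) = φ (ι y))
    (hcomm₂ : ∀ z : D, π (φ z) = φ₂ (π z))
    (x : D)
    (hgenx : LinearIndependent K (fun i : Fin (Module.finrank K D) => φ^[(i : ℕ)] x))
    (χ₂ : Polynomial K) (hχ₂ : IsMinSkew χ₂ φ₂ (π x))
    (y₁ : D₁) (hy₁ : ι y₁ = skewEval χ₂ φ x)
    (χ₁ : Polynomial K) (hχ₁ : IsMinSkew χ₁ φ₁ y₁)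
    (χ : Polynomial K) (hχ : IsMinSkew χ φ x) :
    (LinearIndependent K (fun i : Fin (Module.finrank K D₂) => φ₂^[(i : ℕ)] (π x))) ∧
    (LinearIndependent K (fun i : Fin (Module.finrank K D₁) => φ₁^[(i : ℕ)] y₁)) ∧
    χ = skewMul q χ₁ χ₂ := by
  classical
  have hq0 : 0 < q := by rw [hq]; exact pow_pos hp.pos a
  have hx_span : ⊤ ≤ Submodule.span K (Set.range fun i : ℕ => φ^[i] x) := by
    have h1 := hgenx.span_eq_top_of_card_eq_finrank' (by rw [Fintype.card_fin])
    rw [← h1]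
    apply Submodule.span_mono
    rintro _ ⟨i, rfl⟩
    exact ⟨(i : ℕ), rfl⟩
  have hπ_comm : ∀ (P : Polynomial K) (z : D), π (skewEval P φ z) = skewEval P φ₂ (π z) :=
    fun P z => commute_skewEval hcomm₂ P z
  have hι_comm : ∀ (P : Polynomial K) (w : D₁), ι (skewEval P φ₁ w) = skewEval P φ (ι w) :=
    fun P w => commute_skewEval hcomm₁ P w
  have hπx_span : ⊤ ≤ Submodule.span K (Set.range fun i : ℕ => φ₂^[i] (π x)) := by
    have hmap : Submodule.map π (Submodule.span K (Set.range fun i : ℕ => φ^[i] x))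
        ≤ Submodule.span K (Set.range fun i : ℕ => φ₂^[i] (π x)) := by
      rw [Submodule.map_span]
      apply Submodule.span_le.mpr
      rintro _ ⟨_, ⟨i, rfl⟩, rfl⟩
      exact Submodule.subset_span ⟨i, (commute_iter hcomm₂ i x).symm⟩
    intro z _
    obtain ⟨w, rfl⟩ := hπ z
    exact hmap ⟨w, hx_span Submodule.mem_top, rfl⟩
  obtain ⟨he₂, hgoal1⟩ := gen_lemma hadd₂ hsemi₂ (π x) hπx_span hχ₂
  have hrep_all : ∀ z, z ∈ Submodule.span K (Set.range fun i : ℕ => φ^[i] x) →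
      ∃ Q : Polynomial K, z = skewEval Q φ x := by
    intro z hz
    induction hz using Submodule.span_induction with
    | mem w hw =>
      obtain ⟨i, rfl⟩ := hw
      exact ⟨Polynomial.C 1 * Polynomial.X ^ i, by rw [skewEval_monomial, one_smul]⟩
    | zero => exact ⟨0, (skewEval_zero φ x).symm⟩
    | add u v hu hv ihu ihv =>
      obtain ⟨Q1, h1⟩ := ihu
      obtain ⟨Q2, h2⟩ := ihv
      exact ⟨Q1 + Q2, by rw [skewEval_add, ← h1, ← h2]⟩
    | smul c u hu ihu =>
      obtain ⟨Q1, h1⟩ := ihu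
      exact ⟨Polynomial.C c * Q1, by rw [skewEval_C_mul, ← h1]⟩
  have hy_span : ⊤ ≤ Submodule.span K (Set.range fun i : ℕ => φ₁^[i] y₁) := by
    intro w _
    obtain ⟨Q, hQ⟩ := hrep_all (ι w) (hx_span Submodule.mem_top)
    have hπQ : skewEval Q φ₂ (π x) = 0 := by
      rw [← hπ_comm, ← hQ]
      have hk : ι w ∈ LinearMap.ker π := hexact ▸ LinearMap.mem_range_self ι w
      exact LinearMap.mem_ker.mp hk
    obtain ⟨A, R, hAR, hR⟩ := skew_div hq0 χ₂ hχ₂.1 Q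
    have hRev : skewEval R φ₂ (π x) = 0 := by
      have h := hπQ
      rw [hAR, skewEval_add, skewEval_skewMul hadd₂ hsemi₂, hχ₂.2.1,
        skewEval_zero_pt hadd₂, zero_add] at h
      exact h
    have hR0 : R = 0 := by
      rcases hR with h | h
      · exact h
      · by_contra hne
        exact absurd (hχ₂.2.2 R hne hRev) (by omega)
    have hιw : ι w = ι (skewEval A φ₁ y₁) := by
      rw [hQ, hAR, hR0, add_zero, skewEval_skewMul hadd hsemi, ← hy₁, hι_comm A y₁]
    rw [hι hιw]
    exact skewEval_mem_span A φ₁ y₁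
  obtain ⟨he₁, hgoal2⟩ := gen_lemma hadd₁ hsemi₁ y₁ hy_span hχ₁
  refine ⟨hgoal1, hgoal2, ?_⟩
  have hd12 : Module.finrank K D₂ + Module.finrank K D₁ = Module.finrank K D := by
    have h1 := LinearMap.finrank_range_add_finrank_ker π
    have h2 : LinearMap.range π = ⊤ := LinearMap.range_eq_top.mpr hπ
    have h3 : Module.finrank K (LinearMap.range π) = Module.finrank K D₂ := by
      rw [h2]; exact finrank_top K D₂
    have h4 : Module.finrank K (LinearMap.ker π) = Module.finrank K D₁ := by
      rw [← hexact]; exact LinearMap.finrank_range_of_inj hι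
    rw [h3, h4] at h1
    exact h1
  obtain ⟨hPmonic, hPdeg⟩ := skewMul_monic hq0 hχ₁.1 hχ₂.1
  have hPev : skewEval (skewMul q χ₁ χ₂) φ x = 0 := by
    rw [skewEval_skewMul hadd hsemi, ← hy₁, ← hι_comm, hχ₁.2.1, map_zero]
  have hPd : (skewMul q χ₁ χ₂).natDegree = Module.finrank K D := by
    rw [hPdeg, he₁, he₂]; omega
  have hχdeg_le : χ.natDegree ≤ Module.finrank K D := by
    have h := hχ.2.2 (skewMul q χ₁ χ₂) hPmonic.ne_zero hPev
    omega
  have hχdeg : χ.natDegree = Module.finrank K D := by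
    by_contra hne
    have hlt : χ.natDegree < Module.finrank K D := by omega
    have h0 := eq_zero_of_skewEval_eq_zero hgenx
      (fun i hi => Polynomial.coeff_eq_zero_of_natDegree_lt (by omega)) hχ.2.1
    exact hχ.1.ne_zero h0
  have hdiff : χ - skewMul q χ₁ χ₂ = 0 := by
    apply eq_zero_of_skewEval_eq_zero hgenx ?_
      (by rw [skewEval_sub, hχ.2.1, hPev, sub_zero])
    intro i hi
    rcases eq_or_lt_of_le hi with h | h
    · rw [Polynomial.coeff_sub, ← h]
      have c1 : χ.coeff (Module.finrank K D) = 1 := by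
        rw [← hχdeg]; exact hχ.1.coeff_natDegree
      have c2 : (skewMul q χ₁ χ₂).coeff (Module.finrank K D) = 1 := by
        rw [← hPd]; exact hPmonic.coeff_natDegree
      rw [c1, c2, sub_self]
    · rw [Polynomial.coeff_sub, Polynomial.coeff_eq_zero_of_natDegree_lt (by omega),
        Polynomial.coeff_eq_zero_of_natDegree_lt (by omega), sub_zero]
  exact sub_eq_zero.mp hdiff
end

section
/- Let P = X^d − Σ_{i=0}^{d-1} a_i X^i be a monic skew polynomial in F_{q^r}[X,σ], σ(x) = x^q, and let L_P = X^{q^d} − Σ a_i X^{q^i} be the associated q-linearized polynomial. Let D_P be the φ-module with basis e_0,...,e_{d-1}, φ(e_i) = e_{i+1} for i < d−1 and φ(e_{d-1}) = Σ a_i e_i. Then the map f ↦ f(e_0) is a bijection from the set of φ-equivariant F_{q^r}-linear-over-Frobenius homomorphisms Hom_φ(D_P, F̄_q) (where φ acts on F̄_q by x ↦ x^q) to the set of roots of L_P in F̄_q. -/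
/-- For a monic skew polynomial `P = X^d − Σ aᵢ Xⁱ` over `F_{q^r}` with
associated `q`-linearized polynomial `L_P = X^{q^d} − Σ aᵢ X^{qⁱ}` and associated
`φ`-module `D_P` (basis `e₀, …, e_{d-1}`, `φ(eᵢ) = eᵢ₊₁`, `φ(e_{d-1}) = Σ aᵢ eᵢ`),
the map `f ↦ f(e₀)` is a bijection from the set of `φ`-equivariant homomorphisms
`Hom_φ(D_P, F̄_q)` (where `φ` acts on `F̄_q` by `x ↦ x^q`) onto the set of roots of `L_P`. -/
theorem linearized_roots_bijection
    (p a q r : ℕ) (hp : p.Prime) (ha : 0 < a) (hq : q = p ^ a) (hr : 0 < r)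
    (F : Type*) [Field F] [Fintype F] (hF : Fintype.card F = q ^ r)
    (d : ℕ) (hd : 0 < d) (c : Fin d → F)
    (D : Type*) [AddCommGroup D] [Module F D]
    (e : Module.Basis (Fin d) F D)
    (φ : D → D) (hadd : ∀ u v : D, φ (u + v) = φ u + φ v)
    (hsemi : ∀ (s : F) (u : D), φ (s • u) = s ^ q • φ u)
    (hstep : ∀ (i : Fin d) (h : (i : ℕ) + 1 < d), φ (e i) = e ⟨(i : ℕ) + 1, h⟩)
    (hlast : φ (e ⟨d - 1, by omega⟩) = ∑ i : Fin d, c i • e i) :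
    -- `f ↦ f(e₀)` is injective on `Hom_φ(D_P, F̄_q)` …
    (∀ f g : D →ₗ[F] AlgebraicClosure F,
        (∀ u : D, f (φ u) = f u ^ q) → (∀ u : D, g (φ u) = g u ^ q) →
        f (e ⟨0, hd⟩) = g (e ⟨0, hd⟩) → f = g) ∧
    -- … it lands in the set of roots of `L_P` …
    (∀ f : D →ₗ[F] AlgebraicClosure F, (∀ u : D, f (φ u) = f u ^ q) →
        f (e ⟨0, hd⟩) ^ q ^ d =
          ∑ i : Fin d, algebraMap F (AlgebraicClosure F) (c i) * f (e ⟨0, hd⟩) ^ q ^ (i : ℕ)) ∧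
    -- … and every root of `L_P` is hit.
    (∀ ξ : AlgebraicClosure F,
        ξ ^ q ^ d = ∑ i : Fin d, algebraMap F (AlgebraicClosure F) (c i) * ξ ^ q ^ (i : ℕ) →
        ∃ f : D →ₗ[F] AlgebraicClosure F,
          (∀ u : D, f (φ u) = f u ^ q) ∧ f (e ⟨0, hd⟩) = ξ) := by
  have hpF : Fact p.Prime := ⟨hp⟩
  -- characteristic
  have hcharF : CharP F p := by
    have hdvd : p ∣ ringChar F := by
      rw [prime_dvd_char_iff_dvd_card p, hF, hq, ← pow_mul]
      exact dvd_pow_self p (by positivity)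
    have hprime : (ringChar F).Prime := CharP.char_is_prime F (ringChar F)
    have : ringChar F = p := ((Nat.prime_dvd_prime_iff_eq hp hprime).mp hdvd).symm
    rw [← this]; exact ringChar.charP F
  set K := AlgebraicClosure F with hK
  have hcharK : CharP K p := charP_of_injective_algebraMap
    (algebraMap F K).injective p
  have hfrobsum : ∀ (s : Finset (Fin d)) (g : Fin d → K),
      (∑ i ∈ s, g i) ^ q = ∑ i ∈ s, g i ^ q := by
    intro s g
    rw [hq]
    exact map_sum (iterateFrobenius K p a) g s
  -- key: values on the basis are Frobenius powers of the value at `e₀`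
  have key : ∀ (f : D →ₗ[F] K), (∀ u : D, f (φ u) = f u ^ q) →
      ∀ (n : ℕ) (hn : n < d), f (e ⟨n, hn⟩) = f (e ⟨0, hd⟩) ^ q ^ n := by
    intro f hf n
    induction n with
    | zero => intro hn; simp
    | succ n ih =>
      intro hn
      have hn' : n < d := by omega
      have hstep' := hstep ⟨n, hn'⟩ hn
      calc f (e ⟨n + 1, hn⟩) = f (φ (e ⟨n, hn'⟩)) := by rw [hstep']
        _ = f (e ⟨n, hn'⟩) ^ q := hf _
        _ = (f (e ⟨0, hd⟩) ^ q ^ n) ^ q := by rw [ih hn']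
        _ = f (e ⟨0, hd⟩) ^ q ^ (n + 1) := by rw [← pow_mul, pow_succ]
  -- the root property
  have part2 : ∀ f : D →ₗ[F] K, (∀ u : D, f (φ u) = f u ^ q) →
      f (e ⟨0, hd⟩) ^ q ^ d =
        ∑ i : Fin d, algebraMap F K (c i) * f (e ⟨0, hd⟩) ^ q ^ (i : ℕ) := by
    intro f hf
    have hd1 : d - 1 < d := by omega
    have hdd : d = (d - 1) + 1 := by omega
    calc f (e ⟨0, hd⟩) ^ q ^ d
        = (f (e ⟨0, hd⟩) ^ q ^ (d - 1)) ^ q := by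
          rw [← pow_mul, ← pow_succ, ← hdd]
      _ = f (e ⟨d - 1, hd1⟩) ^ q := by rw [key f hf (d - 1) hd1]
      _ = f (φ (e ⟨d - 1, hd1⟩)) := (hf _).symm
      _ = ∑ i : Fin d, algebraMap F K (c i) * f (e ⟨0, hd⟩) ^ q ^ (i : ℕ) := by
          rw [hlast, map_sum]
          refine Finset.sum_congr rfl fun i _ => ?_
          rw [map_smul, Algebra.smul_def, key f hf i i.isLt]
  refine ⟨?_, part2, ?_⟩
  · -- injectivity
    intro f g hf hg h0
    apply e.ext
    intro i
    rw [show e i = e ⟨(i : ℕ), i.isLt⟩ from by rw [Fin.eta],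
      key f hf i i.isLt, key g hg i i.isLt, h0]
  · -- surjectivity
    intro ξ hξ
    set f : D →ₗ[F] K := e.constr F (fun i : Fin d => ξ ^ q ^ (i : ℕ)) with hfdef
    have hfe : ∀ i : Fin d, f (e i) = ξ ^ q ^ (i : ℕ) := fun i => e.constr_basis F _ i
    have hfe0 : f (e ⟨0, hd⟩) = ξ := by rw [hfe]; simp
    have hbasis : ∀ i : Fin d, f (φ (e i)) = f (e i) ^ q := by
      intro i
      by_cases h : (i : ℕ) + 1 < d
      · rw [hstep i h, show e i = e ⟨(i : ℕ), i.isLt⟩ from by rw [Fin.eta], hfe, hfe,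
          ← pow_mul, ← pow_succ]
      · have hi : (i : ℕ) = d - 1 := by omega
        have hd1 : d - 1 < d := by omega
        have hie : i = ⟨d - 1, hd1⟩ := Fin.ext hi
        have hdd : d = (d - 1) + 1 := by omega
        rw [hie, hlast, map_sum]
        have : ∑ j : Fin d, f (c j • e j)
            = ∑ j : Fin d, algebraMap F K (c j) * ξ ^ q ^ (j : ℕ) := by
          refine Finset.sum_congr rfl fun j _ => ?_
          rw [map_smul, Algebra.smul_def, hfe]
        rw [this, ← hξ, hfe]
        rw [← pow_mul, ← pow_succ, ← hdd]
    refine ⟨f, ?_, hfe0⟩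
    intro u
    conv_lhs => rw [← e.sum_repr u]
    conv_rhs => rw [← e.sum_repr u]
    have hφsum' : ∀ (s : Finset (Fin d)) (g : Fin d → D),
        φ (∑ i ∈ s, g i) = ∑ i ∈ s, φ (g i) :=
      fun s g => map_sum (AddMonoidHom.mk' φ hadd) g s
    have hφsum : φ (∑ i : Fin d, e.repr u i • e i)
        = ∑ i : Fin d, (e.repr u i) ^ q • φ (e i) := by
      rw [hφsum' Finset.univ]
      exact Finset.sum_congr rfl fun i _ => hsemi _ _
    rw [hφsum, map_sum, map_sum, hfrobsum]
    refine Finset.sum_congr rfl fun i _ => ?_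
    rw [f.map_smul, f.map_smul, hbasis i, Algebra.smul_def, Algebra.smul_def, mul_pow, map_pow]
end
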